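/- Let p > 2 be prime and r ≥ 2 an integer, with t = v_p(r-1). Then for every integer n ≥ 1, one has v_p(C(r-1,n)) + n ≥ t + 1. -/

import Mathlib

/-- Lemma 2.1(2): for p > 2 prime, r ≥ 2, t = v_p(r-1), and n ≥ 1,
    v_p(C(r-1,n)) + n ≥ t + 1 (valuations in ℕ∞ so that v_p(0) = ⊤). -/
theorem stmt_1 (p : ℕ) (hp : p.Prime) (hp2 : 2 < p) (r : ℕ) (hr : 2 ≤ r)
    (t : ℕ) (ht : t = padicValNat p (r - 1)) :
    ∀ n : ℕ, 1 ≤ n → emultiplicity p ((r - 1).choose n) + n ≥ (t : ℕ∞) + 1 := by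
  haveI : Fact p.Prime := ⟨hp⟩
  intro n hn
  set m := r - 1 with hm
  have hm1 : 1 ≤ m := by omega
  by_cases hc : n ≤ m
  swap
  · rw [Nat.choose_eq_zero_of_lt (by omega)]
    simp [emultiplicity_zero]
  · have hch : 0 < m.choose n := Nat.choose_pos hc
    have hch' : 0 < (m - 1).choose (n - 1) := Nat.choose_pos (by omega)
    have key : m * (m - 1).choose (n - 1) = m.choose n * n := by
      have h := Nat.add_one_mul_choose_eq (m - 1) (n - 1)
      have h1 : m - 1 + 1 = m := by omega
      have h2 : n - 1 + 1 = n := by omega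
      simp only [Nat.succ_eq_add_one, h1, h2] at h
      exact h
    have hval : padicValNat p (m.choose n) + padicValNat p n ≥ t := by
      have := padicValNat.mul (p := p) hch.ne' (by omega : n ≠ 0)
      have h2 := padicValNat.mul (p := p) (by omega : m ≠ 0)
        hch'.ne'
      rw [← this, ← key, h2, ht]
      omega
    have hvn : padicValNat p n < n := by
      have hdvd : p ^ padicValNat p n ∣ n := pow_padicValNat_dvd
      have hle : p ^ padicValNat p n ≤ n := Nat.le_of_dvd (by omega) hdvd
      calc padicValNat p n < p ^ padicValNat p n :=
            Nat.lt_pow_self (by omega)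
        _ ≤ n := hle
    have hnat : padicValNat p (m.choose n) + n ≥ t + 1 := by omega
    rw [← padicValNat_eq_emultiplicity hch.ne']
    calc ((t : ℕ∞) + 1) = ((t + 1 : ℕ) : ℕ∞) := by push_cast; ring
      _ ≤ ((padicValNat p (m.choose n) + n : ℕ) : ℕ∞) := by exact_mod_cast hnat
      _ = _ := by push_cast; ring
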